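/- Let p be an odd prime. Then W_p ≡ B_{2p−2} − B_{p−1} (mod p), i.e. the rational number W_p − (B_{2p−2} − B_{p−1}) equals p·(a/b) for some integers a, b with p ∤ b. -/

import Mathlib

open Finset

/-- `x ≡ y (mod p^k)` for rationals: `x - y = p^k * (c/d)` with `p ∤ d`. -/
def ratCongr (p k : ℕ) (x y : ℚ) : Prop :=
  ∃ c d : ℤ, ¬ (p : ℤ) ∣ d ∧ x - y = (p : ℚ) ^ k * ((c : ℚ) / (d : ℚ))

/-- The Wilson quotient `W_p = ((p-1)! + 1)/p` (an integer by Wilson's theorem). -/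
def wilsonQuotient (p : ℕ) : ℤ := ((Nat.factorial (p - 1) : ℤ) + 1) / p

/-- The Fermat quotient `q_p(a) = (a^(p-1) - 1)/p` (an integer for `p ∤ a`). -/
def fermatQuotient (p a : ℕ) : ℤ := ((a : ℤ) ^ (p - 1) - 1) / p

/-- A prime `p` is a Wilson prime if `p ∣ W_p`. -/
def IsWilsonPrime (p : ℕ) : Prop := (p : ℤ) ∣ wilsonQuotient p

/-- A prime `p` is a Lerch prime if `∑_{a=1}^{p-1} q_p(a) ≡ W_p (mod p²)`. -/
def IsLerchPrime (p : ℕ) : Prop :=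
  (p : ℤ) ^ 2 ∣ (∑ a ∈ Icc 1 (p - 1), fermatQuotient p a) - wilsonQuotient p

/-- The harmonic number `H_a = ∑_{k=1}^{a} 1/k`. -/
def harmonicNum (a : ℕ) : ℚ := ∑ k ∈ Icc 1 a, (1 : ℚ) / k

/-- The generalized harmonic number `H_{a,2} = ∑_{k=1}^{a} 1/k²`. -/
def harmonicNum2 (a : ℕ) : ℚ := ∑ k ∈ Icc 1 a, (1 : ℚ) / (k : ℚ) ^ 2

lemma ratCongr_of_norm {p : ℕ} [hp : Fact p.Prime] (r : ℚ) (h : ‖(r : ℚ_[p])‖ ≤ (p:ℝ)⁻¹) :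
    ∃ c d : ℤ, ¬ (p : ℤ) ∣ d ∧ r = (p : ℚ) ^ 1 * ((c : ℚ) / (d : ℚ)) := by
  rcases eq_or_ne r 0 with rfl | hr
  · refine ⟨0, 1, fun hd => hp.out.one_lt.ne' ?_, by simp⟩
    exact Nat.dvd_one.mp (Int.natCast_dvd_natCast.mp (by exact_mod_cast hd))
  have hr' : (r : ℚ_[p]) ≠ 0 := by exact_mod_cast Rat.cast_ne_zero.mpr hr
  rw [Padic.norm_eq_zpow_neg_valuation hr'] at h
  have hp1 : (1:ℝ) < (p:ℝ) := by exact_mod_cast hp.out.one_lt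
  have hv : (1:ℤ) ≤ (r : ℚ_[p]).valuation := by
    have h2 : ((p:ℝ) ^ (-(r : ℚ_[p]).valuation) ≤ (p:ℝ) ^ (-(1:ℤ))) := by
      simpa using h
    have := (zpow_le_zpow_iff_right₀ hp1).mp h2
    omega
  rw [Padic.valuation_ratCast, padicValRat] at hv
  have hden : ¬ p ∣ r.den := by
    intro hdvd
    have hnum : ¬ (p:ℤ) ∣ r.num := by
      intro hn
      have h1 : p ∣ r.num.natAbs := Int.natCast_dvd_natCast.mp (Int.dvd_natAbs.mpr hn)
      exact hp.out.not_dvd_one (Nat.dvd_gcd h1 hdvd |>.trans (dvd_of_eq r.reduced))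
    rw [padicValInt.eq_zero_of_not_dvd hnum] at hv
    omega
  rw [padicValNat.eq_zero_of_not_dvd hden] at hv
  have hnum : (p:ℤ) ∣ r.num := by
    by_contra hn
    rw [padicValInt.eq_zero_of_not_dvd hn] at hv; omega
  obtain ⟨c, hc⟩ := hnum
  refine ⟨c, r.den, fun hd => hden (Int.ofNat_dvd.mp (by exact_mod_cast hd)), ?_⟩
  rw [pow_one]
  have hd0 : (r.den : ℚ) ≠ 0 := by
    exact_mod_cast r.den_nz
  calc r = (r.num : ℚ) / (r.den : ℚ) := (Rat.num_div_den r).symm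
      _ = (p:ℚ) * ((c:ℚ)/(r.den:ℚ)) := by
          rw [hc]; push_cast; ring

lemma faulhaber_identity (p m : ℕ) :
    (p:ℚ) * bernoulli m = (∑ k ∈ range p, (k:ℚ)^m)
      - ∑ i ∈ range m, bernoulli i * (m.choose i) * (p:ℚ)^(m+1-i) / ((m+1-i : ℕ):ℚ) := by
  have h := sum_range_pow p m
  rw [Finset.sum_range_succ] at h
  have hlast : bernoulli m * ((m + 1).choose m) * (p : ℚ) ^ (m + 1 - m) / (m + 1)
      = (p:ℚ) * bernoulli m := by
    rw [Nat.choose_succ_self_right]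
    have : m + 1 - m = 1 := by omega
    rw [this]
    have h1 : ((m:ℚ)+1) ≠ 0 := by positivity
    field_simp
    push_cast; ring
  have key : ∀ i ∈ range m, bernoulli i * (((m+1).choose i : ℕ):ℚ) * (p:ℚ)^(m+1-i) / ((m:ℚ)+1)
      = bernoulli i * ((m.choose i : ℕ):ℚ) * (p:ℚ)^(m+1-i) / ((m+1-i : ℕ):ℚ) := by
    intro i hi
    have hi' : i < m := mem_range.mp hi
    have h1 : ((m:ℚ)+1) ≠ 0 := by positivity
    have h2 : ((m+1-i : ℕ):ℚ) ≠ 0 := by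
      have : 0 < m+1-i := by omega
      exact_mod_cast this.ne'
    rw [div_eq_div_iff h1 h2]
    have hnat : (m.choose i) * (m + 1) = (m+1).choose i * (m + 1 - i) :=
      Nat.choose_mul_succ_eq m i
    have hq : ((m.choose i : ℕ):ℚ) * ((m:ℚ)+1) = (((m+1).choose i : ℕ):ℚ) * ((m+1-i : ℕ):ℚ) := by
      exact_mod_cast congrArg (fun n : ℕ => (n:ℚ)) hnat
    linear_combination -(bernoulli i * (p:ℚ)^(m+1-i)) * hq
  rw [Finset.sum_congr rfl key] at h
  linarith [h]

lemma norm_nat_eq {p : ℕ} [hp : Fact p.Prime] (k : ℕ) (hk : 0 < k) :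
    ‖((k:ℚ_[p]))‖ = (p:ℝ) ^ (-(padicValNat p k : ℤ)) := by
  have hk' : ((k:ℚ_[p])) ≠ 0 := Nat.cast_ne_zero.mpr hk.ne'
  rw [Padic.norm_eq_zpow_neg_valuation hk', Padic.valuation_natCast]

lemma norm_term_le {p : ℕ} [hp : Fact p.Prime] (B : ℚ) (c : ℕ) (k t : ℕ) (hk : 0 < k)
    (hB : ‖(((p:ℚ) * B : ℚ) : ℚ_[p])‖ ≤ 1)
    (hkt : padicValNat p k + t ≤ k - 1) :
    ‖((B * c * (p:ℚ)^k / ((k:ℕ):ℚ) : ℚ) : ℚ_[p])‖ ≤ (p:ℝ) ^ (-(t:ℤ)) := by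
  have hp1 : (1:ℝ) < (p:ℝ) := by exact_mod_cast hp.out.one_lt
  have hp0 : (0:ℝ) < (p:ℝ) := by positivity
  have hcast : ((B * c * (p:ℚ)^k / ((k:ℕ):ℚ) : ℚ) : ℚ_[p])
      = ((p:ℚ_[p]) * (B:ℚ_[p])) * (c:ℚ_[p]) * ((p:ℚ_[p])^(k-1) / (k:ℚ_[p])) := by
    push_cast
    have : (p:ℚ_[p])^k = (p:ℚ_[p]) * (p:ℚ_[p])^(k-1) := by
      rw [← pow_succ']
      congr 1
      omega
    rw [this]
    ring
  rw [hcast]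
  have h1 : ‖(p:ℚ_[p]) * (B:ℚ_[p])‖ ≤ 1 := by
    have : ((((p:ℚ) * B : ℚ)) : ℚ_[p]) = (p:ℚ_[p]) * (B:ℚ_[p]) := by push_cast; ring
    rwa [this] at hB
  have h2 : ‖(c:ℚ_[p])‖ ≤ 1 := by
    have := Padic.norm_int_le_one (p := p) (c:ℤ)
    simpa using this
  have h3 : ‖(p:ℚ_[p])^(k-1) / (k:ℚ_[p])‖ ≤ (p:ℝ) ^ (-(t:ℤ)) := by
    rw [norm_div, norm_pow, Padic.norm_p, norm_nat_eq k hk]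
    rw [← zpow_natCast ((p:ℝ)⁻¹), ← zpow_neg_one (p:ℝ), ← zpow_mul, ← zpow_sub₀ hp0.ne']
    apply zpow_le_zpow_right₀ hp1.le
    omega
  calc ‖(p:ℚ_[p]) * (B:ℚ_[p]) * (c:ℚ_[p]) * ((p:ℚ_[p])^(k-1) / (k:ℚ_[p]))‖
      = ‖(p:ℚ_[p]) * (B:ℚ_[p])‖ * ‖(c:ℚ_[p])‖ * ‖(p:ℚ_[p])^(k-1) / (k:ℚ_[p])‖ := by
        rw [norm_mul, norm_mul]
    _ ≤ 1 * 1 * ((p:ℝ) ^ (-(t:ℤ))) := by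
        apply mul_le_mul (mul_le_mul h1 h2 (norm_nonneg _) (by linarith [norm_nonneg ((p:ℚ_[p]) * (B:ℚ_[p]))])) h3 (norm_nonneg _) (by positivity)
    _ = (p:ℝ) ^ (-(t:ℤ)) := by ring

lemma padicValNat_le_sub_one {p : ℕ} [hp : Fact p.Prime] (k : ℕ) (hk : 0 < k) :
    padicValNat p k ≤ k - 1 := by
  have h1 : p ^ (padicValNat p k) ∣ k := pow_padicValNat_dvd
  have h2 : p ^ (padicValNat p k) ≤ k := Nat.le_of_dvd hk h1
  have h3 : padicValNat p k < p ^ (padicValNat p k) :=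
    Nat.lt_pow_self hp.out.one_lt
  omega

lemma norm_sub_le_max' {p : ℕ} [Fact p.Prime] (x y : ℚ_[p]) : ‖x - y‖ ≤ max ‖x‖ ‖y‖ := by
  rw [sub_eq_add_neg]
  simpa [norm_neg] using IsUltrametricDist.norm_add_le_max x (-y)

lemma norm_p_mul_bernoulli_le_one {p : ℕ} [hp : Fact p.Prime] (m : ℕ) :
    ‖(((p:ℚ) * bernoulli m : ℚ) : ℚ_[p])‖ ≤ 1 := by
  induction m using Nat.strong_induction_on with
  | _ m ih =>
    have h : ((p:ℚ) * bernoulli m : ℚ) = (∑ k ∈ range p, (k:ℚ)^m)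
        - ∑ i ∈ range m, bernoulli i * (m.choose i) * (p:ℚ)^(m+1-i) / ((m+1-i : ℕ):ℚ) :=
      faulhaber_identity p m
    rw [h, Rat.cast_sub, Rat.cast_sum, Rat.cast_sum]
    apply le_trans (norm_sub_le_max' _ _)
    apply max_le
    · apply IsUltrametricDist.norm_sum_le_of_forall_le_of_nonneg zero_le_one
      intro k _
      have hc : (((k:ℚ)^m : ℚ) : ℚ_[p]) = ((k:ℚ_[p]))^m := by push_cast; ring
      rw [hc]
      calc ‖((k:ℚ_[p]))^m‖ = ‖((k:ℚ_[p]))‖^m := norm_pow _ _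
        _ ≤ 1^m := pow_le_pow_left₀ (norm_nonneg _) (by
              simpa using Padic.norm_int_le_one (p := p) (k:ℤ)) m
        _ = 1 := one_pow m
    · apply IsUltrametricDist.norm_sum_le_of_forall_le_of_nonneg zero_le_one
      intro i hi
      have hi' : i < m := mem_range.mp hi
      have hterm := norm_term_le (p := p) (bernoulli i) (m.choose i) (m+1-i) 0
        (by omega) (ih i hi') (by
          have := padicValNat_le_sub_one (p := p) (m+1-i) (by omega)
          omega)
      simpa using hterm

lemma padicValNat_le_sub_three {p : ℕ} [hp : Fact p.Prime] (hp5 : 5 ≤ p) (k : ℕ) (hk : 3 ≤ k) :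
    padicValNat p k ≤ k - 3 := by
  set v := padicValNat p k with hv
  rcases Nat.eq_zero_or_pos v with h0 | h1
  · omega
  have hdvd : p ^ v ∣ k := pow_padicValNat_dvd
  have h2 : p ^ v ≤ k := Nat.le_of_dvd (by omega) hdvd
  have h3 : 5 ^ v ≤ p ^ v := Nat.pow_le_pow_left hp5 v
  have h4 : v + 3 ≤ 5 ^ v := by
    clear_value v
    clear hv hdvd h2 h3
    induction v with
    | zero => omega
    | succ n ihn =>
      rcases Nat.eq_zero_or_pos n with h|h
      · subst h; norm_num
      · have := ihn (by omega)
        have h5 : 5 ^ (n+1) = 5 * 5 ^ n := by ring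
        omega
  omega

lemma main_cong {p : ℕ} [hp : Fact p.Prime] (hp5 : 5 ≤ p) (m : ℕ) (hm1 : 1 ≤ m)
    (hm : bernoulli (m-1) = 0) :
    ‖((((∑ k ∈ range p, (k:ℚ)^m) - (p:ℚ) * bernoulli m : ℚ)) : ℚ_[p])‖ ≤ (p:ℝ)^(-(2:ℤ)) := by
  have h : ((∑ k ∈ range p, (k:ℚ)^m) - (p:ℚ) * bernoulli m : ℚ)
      = ∑ i ∈ range m, bernoulli i * (m.choose i) * (p:ℚ)^(m+1-i) / ((m+1-i : ℕ):ℚ) := by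
    have := faulhaber_identity p m
    linarith
  rw [h, Rat.cast_sum]
  apply IsUltrametricDist.norm_sum_le_of_forall_le_of_nonneg (by positivity)
  intro i hi
  have hi' : i < m := mem_range.mp hi
  rcases eq_or_ne i (m-1) with rfl | hne
  · simp [hm]
  · have hk3 : 3 ≤ m + 1 - i := by omega
    have hval := padicValNat_le_sub_three (p := p) hp5 (m+1-i) hk3
    have hterm := norm_term_le (p := p) (bernoulli i) (m.choose i) (m+1-i) 2
      (by omega) (norm_p_mul_bernoulli_le_one i) (by omega)
    simpa using hterm

lemma sq_dvd_pow_sub (t : ℤ) (n : ℕ) : t^2 ∣ (1+t)^n - (1 + n*t) := by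
  induction n with
  | zero => simp
  | succ n ih =>
    have key : (1+t)^(n+1) - (1 + (n+1)*t)
        = (1+t) * ((1+t)^n - (1 + n*t)) + n * t^2 := by push_cast; ring
    rw [show ((n+1 : ℕ) : ℤ) = (n:ℤ)+1 by push_cast; ring, key]
    exact dvd_add (Dvd.dvd.mul_left ih _) (Dvd.dvd.mul_left dvd_rfl _)

lemma prod_one_add_mul {ι : Type*} (s : Finset ι) (f : ι → ℤ) (t : ℤ) :
    t^2 ∣ (∏ a ∈ s, (1 + t * f a)) - (1 + t * ∑ a ∈ s, f a) := by
  classical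
  induction s using Finset.induction_on with
  | empty => simp
  | @insert x s' hx ih =>
    rw [Finset.prod_insert hx, Finset.sum_insert hx]
    have key : (1 + t * f x) * (∏ a ∈ s', (1 + t * f a)) - (1 + t * (f x + ∑ a ∈ s', f a))
        = (1 + t * f x) * ((∏ a ∈ s', (1 + t * f a)) - (1 + t * ∑ a ∈ s', f a))
          + (f x * ∑ a ∈ s', f a) * t^2 := by ring
    rw [key]
    exact dvd_add (Dvd.dvd.mul_left ih _) (Dvd.dvd.mul_left dvd_rfl _)

-- Fermat: for 1 ≤ a ≤ p-1, a^(p-1) = 1 + p * q a with q a the exact quotient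
lemma fermat_exact {p : ℕ} [hp : Fact p.Prime] {a : ℕ} (ha : a ∈ Icc 1 (p-1)) :
    (a:ℤ)^(p-1) = 1 + p * (((a:ℤ)^(p-1) - 1) / p) := by
  rw [mem_Icc] at ha
  have hnd : ¬ (p:ℤ) ∣ (a:ℤ) := by
    intro h
    have : p ∣ a := Int.ofNat_dvd.mp (by exact_mod_cast h)
    have := Nat.le_of_dvd (by omega) this
    have hp2 := hp.out.two_le
    omega
  have hdvd : (p:ℤ) ∣ (a:ℤ)^(p-1) - 1 := by
    have h0 : ((a : ZMod p)) ≠ 0 := by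
      rw [Ne, ZMod.natCast_eq_zero_iff]
      intro h
      exact hnd (by exact_mod_cast Int.ofNat_dvd.mpr h)
    have h1 : ((a : ZMod p))^(p-1) = 1 := ZMod.pow_card_sub_one_eq_one h0
    have : (((a:ℤ)^(p-1) - 1 : ℤ) : ZMod p) = 0 := by
      push_cast
      rw [h1]; ring
    exact (ZMod.intCast_zmod_eq_zero_iff_dvd _ _).mp this
  rw [Int.mul_ediv_cancel' hdvd]
  ring

lemma wilson_exact {p : ℕ} [hp : Fact p.Prime] :
    ((Nat.factorial (p-1) : ℤ)) = p * wilsonQuotient p - 1 := by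
  have hdvd : (p:ℤ) ∣ ((Nat.factorial (p-1) : ℤ) + 1) := by
    have h1 : ((Nat.factorial (p-1) : ZMod p)) = -1 := ZMod.wilsons_lemma p
    have : (((Nat.factorial (p-1) : ℤ) + 1 : ℤ) : ZMod p) = 0 := by
      push_cast
      rw [h1]; ring
    exact (ZMod.intCast_zmod_eq_zero_iff_dvd _ _).mp this
  rw [wilsonQuotient, Int.mul_ediv_cancel' hdvd]
  ring

-- Lerch-lite: p ∣ (∑ q) - W
lemma lerch_lite {p : ℕ} [hp : Fact p.Prime] (hodd : Odd p) :
    (p:ℤ) ∣ (∑ a ∈ Icc 1 (p-1), (((a:ℤ)^(p-1) - 1) / p)) - wilsonQuotient p := by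
  set q : ℕ → ℤ := fun a => (((a:ℤ)^(p-1) - 1) / p) with hq
  set S := ∑ a ∈ Icc 1 (p-1), q a with hS
  set W := wilsonQuotient p with hW
  have hp0 : (p:ℤ) ≠ 0 := by exact_mod_cast hp.out.pos.ne'
  have hp3 : 3 ≤ p := by
    have h2 := hp.out.two_le
    rcases hodd with ⟨k, hk⟩
    omega
  have heven : Even (p-1) := Nat.Odd.sub_odd hodd odd_one
  set P := ∏ a ∈ Icc 1 (p-1), (1 + (p:ℤ) * q a) with hP
  have h1 : P = ((Nat.factorial (p-1) : ℤ))^(p-1) := by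
    rw [hP]
    have : ∀ a ∈ Icc 1 (p-1), (1 + (p:ℤ) * q a) = (a:ℤ)^(p-1) := by
      intro a ha
      rw [hq]
      exact (fermat_exact ha).symm
    rw [Finset.prod_congr rfl this, Finset.prod_pow]
    congr 1
    have hnat : ∏ a ∈ Icc 1 (p-1), a = Nat.factorial (p-1) := by
      rw [← Finset.Ico_add_one_right_eq_Icc, Finset.prod_Ico_eq_prod_range]
      simpa [Nat.add_comm] using Finset.prod_range_add_one_eq_factorial (p-1)
    rw [← hnat]
    push_cast
    rfl
  have h2 : P = (1 - (p:ℤ)*W)^(p-1) := by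
    rw [h1, wilson_exact, ← hW]
    rw [show (p:ℤ)*W - 1 = -(1 - (p:ℤ)*W) by ring, heven.neg_pow]
  have d1 : (p:ℤ)^2 ∣ P - (1 + (p:ℤ) * S) := by
    rw [hP, hS]
    exact prod_one_add_mul _ q (p:ℤ)
  have d3 : (p:ℤ)^2 ∣ P - (1 + ((p-1:ℕ):ℤ) * (-((p:ℤ)*W))) := by
    rw [h2]
    have hsq := sq_dvd_pow_sub (-((p:ℤ)*W)) (p-1)
    rw [show ((1:ℤ) + -((p:ℤ)*W)) = 1 - (p:ℤ)*W by ring] at hsq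
    have hpt : (p:ℤ)^2 ∣ (-((p:ℤ)*W))^2 := ⟨W^2, by ring⟩
    exact dvd_trans hpt hsq
  have d4 : (p:ℤ)^2 ∣ (1 + (p:ℤ)*S) - (1 + ((p-1:ℕ):ℤ) * (-((p:ℤ)*W))) := by
    have h := dvd_sub d3 d1
    have e : (P - (1 + ((p-1:ℕ):ℤ) * (-((p:ℤ)*W)))) - (P - (1 + (p:ℤ)*S))
        = (1 + (p:ℤ)*S) - (1 + ((p-1:ℕ):ℤ) * (-((p:ℤ)*W))) := by ring
    rwa [e] at h
  have hcast : ((p-1:ℕ):ℤ) = (p:ℤ) - 1 := by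
    push_cast [Nat.cast_sub (by omega : 1 ≤ p)]
    ring
  have d5 : (p:ℤ)^2 ∣ (p:ℤ) * (S - W) := by
    have e : (1 + (p:ℤ)*S) - (1 + ((p-1:ℕ):ℤ) * (-((p:ℤ)*W)))
        = (p:ℤ) * (S - W) + (p:ℤ)^2 * W := by rw [hcast]; ring
    rw [e] at d4
    have := dvd_sub d4 (Dvd.intro W rfl)
    simpa using this
  obtain ⟨c, hc⟩ := d5
  refine ⟨c, ?_⟩
  apply mul_left_cancel₀ hp0
  rw [← mul_assoc]
  rw [show (p:ℤ) * (p:ℤ) = (p:ℤ)^2 by ring]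
  exact hc ▸ rfl

lemma sum_cast_lemma (p m : ℕ) (hp : 0 < p) (hm : 1 ≤ m) :
    (∑ k ∈ range p, (k:ℚ)^m) = ((∑ a ∈ Icc 1 (p-1), (a:ℤ)^m : ℤ) : ℚ) := by
  rw [Finset.range_eq_Ico, Finset.sum_eq_sum_Ico_succ_bot hp]
  have h0 : ((0:ℕ):ℚ)^m = 0 := by
    rw [Nat.cast_zero, zero_pow (by omega : m ≠ 0)]
  rw [h0, zero_add]
  have hIco : Ico (0+1) p = Icc 1 (p-1) := by
    rw [← Finset.Ico_add_one_right_eq_Icc]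
    congr 1
    omega
  rw [hIco]
  push_cast
  rfl

theorem stmt_4 (p : ℕ) (hp : p.Prime) (hodd : Odd p) :
    ratCongr p 1 ((wilsonQuotient p : ℚ))
      (bernoulli (2 * p - 2) - bernoulli (p - 1)) := by
  haveI : Fact p.Prime := ⟨hp⟩
  rcases eq_or_ne p 3 with rfl | hp3
  · refine ⟨2, 5, by decide, ?_⟩
    have hW : wilsonQuotient 3 = 1 := by decide
    rw [hW]
    have hb4 : bernoulli 4 = -1/30 := by
      rw [bernoulli_eq_bernoulli'_of_ne_one (by norm_num), bernoulli'_four]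
    have hb2 : bernoulli 2 = 1/6 := by
      rw [bernoulli_eq_bernoulli'_of_ne_one (by norm_num)]
      simp [bernoulli'_two]
    norm_num [hb4, hb2]
  · have hp5 : 5 ≤ p := by
      obtain ⟨k, hk⟩ := hodd
      have := hp.two_le
      omega
    set B1 := bernoulli (p-1) with hB1
    set B2 := bernoulli (2*p-2) with hB2
    set W := wilsonQuotient p with hW
    set q : ℕ → ℤ := fun a => (((a:ℤ)^(p-1) - 1) / p) with hq
    set S := ∑ a ∈ Icc 1 (p-1), q a with hS
    set U1 := ∑ a ∈ Icc 1 (p-1), (a:ℤ)^(p-1) with hU1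
    set U2 := ∑ a ∈ Icc 1 (p-1), (a:ℤ)^(2*p-2) with hU2
    -- Bernoulli at odd indices vanish
    have hodd1 : bernoulli (p-1-1) = 0 := by
      have h1 : p-1-1 = p-2 := by omega
      rw [h1, bernoulli_eq_bernoulli'_of_ne_one (by omega)]
      apply bernoulli'_eq_zero_of_odd _ (by omega)
      obtain ⟨k, hk⟩ := hodd
      exact ⟨k-1, by omega⟩
    have hodd2 : bernoulli (2*p-2-1) = 0 := by
      rw [bernoulli_eq_bernoulli'_of_ne_one (by omega)]
      apply bernoulli'_eq_zero_of_odd _ (by omega)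
      exact ⟨p-2, by omega⟩
    -- Faulhaber congruences
    have hA1 : ‖(((U1:ℚ) - (p:ℚ) * B1 : ℚ) : ℚ_[p])‖ ≤ (p:ℝ)^(-(2:ℤ)) := by
      have := main_cong (p := p) hp5 (p-1) (by omega) hodd1
      rwa [sum_cast_lemma p (p-1) (by omega) (by omega)] at this
    have hA2 : ‖(((U2:ℚ) - (p:ℚ) * B2 : ℚ) : ℚ_[p])‖ ≤ (p:ℝ)^(-(2:ℤ)) := by
      have := main_cong (p := p) hp5 (2*p-2) (by omega) hodd2
      rwa [sum_cast_lemma p (2*p-2) (by omega) (by omega)] at this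
    -- integer congruence
    have hA3 : (p:ℤ)^2 ∣ U2 - U1 - (p:ℤ) * W := by
      have hterm : ∀ a ∈ Icc 1 (p-1), (a:ℤ)^(2*p-2) - (a:ℤ)^(p-1)
          = (p:ℤ) * q a + (p:ℤ)^2 * (q a)^2 := by
        intro a ha
        have hf := fermat_exact (p := p) ha
        have h2p : 2*p-2 = (p-1)*2 := by omega
        rw [h2p, pow_mul, hf]
        simp only [hq]
        ring
      have hsum : U2 - U1 = (p:ℤ) * S + (p:ℤ)^2 * ∑ a ∈ Icc 1 (p-1), (q a)^2 := by
        calc U2 - U1 = ∑ a ∈ Icc 1 (p-1), ((a:ℤ)^(2*p-2) - (a:ℤ)^(p-1)) := by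
              rw [hU2, hU1, Finset.sum_sub_distrib]
          _ = ∑ a ∈ Icc 1 (p-1), ((p:ℤ) * q a + (p:ℤ)^2 * (q a)^2) :=
              Finset.sum_congr rfl hterm
          _ = (p:ℤ) * S + (p:ℤ)^2 * ∑ a ∈ Icc 1 (p-1), (q a)^2 := by
              rw [Finset.sum_add_distrib, ← Finset.mul_sum, ← Finset.mul_sum, hS]
      have hlerch : (p:ℤ) ∣ S - W := lerch_lite hodd
      obtain ⟨c, hc⟩ := hlerch
      have : U2 - U1 - (p:ℤ)*W = (p:ℤ)^2 * (c + ∑ a ∈ Icc 1 (p-1), (q a)^2) := by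
        rw [hsum]
        have : (p:ℤ) * S - (p:ℤ) * W = (p:ℤ)^2 * c := by
          rw [← mul_sub, hc]; ring
        linear_combination this
      exact ⟨_, this⟩
    have hA3' : ‖(((U2 - U1 - (p:ℤ) * W : ℤ) : ℚ_[p]))‖ ≤ (p:ℝ)^(-(2:ℤ)) := by
      have := (Padic.norm_int_le_pow_iff_dvd (p := p) (U2 - U1 - (p:ℤ) * W) 2).mpr
        (by exact_mod_cast hA3)
      simpa using this
    -- assemble
    set r : ℚ := (W:ℚ) - (B2 - B1) with hr
    have hkey : (((p:ℚ) * r : ℚ) : ℚ_[p])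
        = (((U2:ℚ) - (p:ℚ) * B2 : ℚ) : ℚ_[p]) - (((U1:ℚ) - (p:ℚ) * B1 : ℚ) : ℚ_[p])
          - (((U2 - U1 - (p:ℤ) * W : ℤ) : ℚ) : ℚ_[p]) := by
      rw [← Rat.cast_sub, ← Rat.cast_sub]
      congr 1
      rw [hr]
      push_cast
      ring
    have hnorm2 : ‖(((p:ℚ) * r : ℚ) : ℚ_[p])‖ ≤ (p:ℝ)^(-(2:ℤ)) := by
      rw [hkey]
      refine le_trans (norm_sub_le_max' _ _) (max_le (le_trans (norm_sub_le_max' _ _)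
        (max_le hA2 hA1)) ?_)
      rw [show (((U2 - U1 - (p:ℤ) * W : ℤ) : ℚ) : ℚ_[p]) = ((U2 - U1 - (p:ℤ) * W : ℤ) : ℚ_[p]) by push_cast; ring]
      exact hA3'
    have hp0 : (0:ℝ) < (p:ℝ)⁻¹ := by
      have : (0:ℝ) < (p:ℝ) := by exact_mod_cast hp.pos
      positivity
    have hnorm : ‖((r : ℚ) : ℚ_[p])‖ ≤ (p:ℝ)⁻¹ := by
      have hcast : (((p:ℚ) * r : ℚ) : ℚ_[p]) = (p:ℚ_[p]) * (r : ℚ_[p]) := by push_cast; ring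
      rw [hcast, norm_mul, Padic.norm_p] at hnorm2
      have h2 : (p:ℝ)^(-(2:ℤ)) = (p:ℝ)⁻¹ * (p:ℝ)⁻¹ := by
        rw [show (-(2:ℤ)) = (-1) + (-1) by ring, zpow_add₀ (by positivity : (p:ℝ) ≠ 0)]
        simp
      rw [h2] at hnorm2
      exact (mul_le_mul_iff_of_pos_left hp0).mp hnorm2
    exact ratCongr_of_norm r hnorm
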